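/- arXiv:0709.2449 — 2 statements merged into one kernel-verified Lean document; each statement's English description precedes it below -/
import Mathlib

section
/- With c_i^n the Taylor coefficients at 0 of (z + 1/(z+2))^n, the tail sum T_n := Σ_{l=0}^∞ c_{n+1+l}^n equals Σ_{b=0}^{n−1} C(2n, b) 3^b / (2^{2n} 3^n), and in particular T_n > 0 for n ≥ 1. -/
open Finset FormalMultilinearSeries

/-- Partial sums of the negative binomial series. -/
lemma negbin_partial (k : ℕ) (z : ℝ) (N : ℕ) :
    (∑ i ∈ range (N+1), ((i+k).choose k : ℝ) * z^i) * (1-z)^(k+1)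
      = ∑ s ∈ range (N+1), ((N+k+1).choose s : ℝ) * z^s * (1-z)^(N+k+1-s) := by
  induction N with
  | zero => simp
  | succ N ih =>
      rw [sum_range_succ, add_mul, ih]
      rw [show N+1+k+1 = (N+k+1)+1 by omega]
      rw [sum_range_succ' (fun s => (((N+k+1)+1).choose s : ℝ) * z^s * (1-z)^((N+k+1)+1-s)) (N+1)]
      have h1 : ∀ i ∈ range (N+1),
          ((((N+k+1)+1).choose (i+1) : ℝ) * z^(i+1) * (1-z)^((N+k+1)+1-(i+1)))
          = z * (((N+k+1).choose i : ℝ) * z^i * (1-z)^(N+k+1-i))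
            + (1-z) * (((N+k+1).choose (i+1) : ℝ) * z^(i+1) * (1-z)^(N+k+1-(i+1))) := by
        intro i hi
        rw [mem_range] at hi
        rw [Nat.choose_succ_succ (N+k+1) i,
          show (N+k+1)+1-(i+1) = k+(N-i)+1 by omega,
          show N+k+1-i = k+(N-i)+1 by omega,
          show N+k+1-(i+1) = k+(N-i) by omega]
        push_cast
        ring
      rw [sum_congr rfl h1, sum_add_distrib, ← mul_sum, ← mul_sum]
      have hB : (∑ i ∈ range (N+1), ((N+k+1).choose (i+1) : ℝ) * z^(i+1) * (1-z)^(N+k+1-(i+1)))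
            + ((N+k+1).choose 0 : ℝ) * z^0 * (1-z)^(N+k+1-0)
          = (∑ s ∈ range (N+1), ((N+k+1).choose s : ℝ) * z^s * (1-z)^(N+k+1-s))
            + ((N+k+1).choose (N+1) : ℝ) * z^(N+1) * (1-z)^(N+k+1-(N+1)) := by
        rw [← sum_range_succ (fun s => ((N+k+1).choose s : ℝ) * z^s * (1-z)^(N+k+1-s)) (N+1),
          ← sum_range_succ' (fun s => ((N+k+1).choose s : ℝ) * z^s * (1-z)^(N+k+1-s)) (N+1)]
      rw [show N+k+1-(N+1) = k by omega, show N+k+1-0 = N+k+1 by omega] at hB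
      have hch : (N+1+k).choose k = (N+k+1).choose (N+1) := by
        rw [show N+1+k = N+k+1 by omega, ← Nat.choose_symm (show k ≤ N+k+1 by omega)]
        congr 1
        omega
      rw [hch, show (N+k+1)+1-0 = N+k+2 by omega]
      simp only [Nat.choose_zero_right, Nat.cast_one] at hB ⊢
      linear_combination (z-1) * hB

noncomputable def ac (k i : ℕ) : ℝ := ((i+k).choose k : ℝ) * (-1/2)^i / 2^(k+1)

lemma hasSum_ac (k : ℕ) {x : ℝ} (hx : |x| < 2) :
    HasSum (fun i => ac k i * x^i) (1/(x+2)^(k+1)) := by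
  have hr : ‖-(x/2)‖ < 1 := by
    rw [Real.norm_eq_abs, abs_neg, abs_div, abs_of_pos (by norm_num : (0:ℝ) < 2)]
    linarith
  have h2 := (hasSum_choose_mul_geometric_of_norm_lt_one (𝕜 := ℝ) k hr).div_const (2^(k+1))
  convert h2 using 1
  · rfl
  · funext i
    unfold ac
    ring
  · rw [div_div, ← mul_pow]
    congr 2
    ring

lemma sum_ac (k N : ℕ) :
    (∑ i ∈ range (N+1), ac k i) * 3^(k+1)
      = ∑ s ∈ range (N+1), ((N+k+1).choose s : ℝ) * (-1/2)^s * (3/2)^(N+k+1-s) := by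
  have h := negbin_partial k (-1/2) N
  rw [show (1:ℝ)-(-1/2) = 3/2 by norm_num] at h
  rw [← h]
  unfold ac
  rw [← sum_div, div_mul_eq_mul_div, div_pow, mul_div_assoc]

noncomputable def qc (n t : ℕ) : ℝ :=
  ∑ j ∈ range (n+1), (-1:ℝ)^(n+j) * ((2*n).choose (n+j) : ℝ) * ((j.choose t : ℝ) * 2^(j-t))

lemma qc_eq_zero {n i : ℕ} (hi : n+1 ≤ i) : qc n i = 0 := by
  apply sum_eq_zero
  intro j hj
  rw [mem_range] at hj
  rw [Nat.choose_eq_zero_of_lt (show j < i by omega)]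
  simp

lemma hasSum_qc (n : ℕ) (x : ℝ) :
    HasSum (fun i => qc n i * x^i)
      (∑ j ∈ range (n+1), (-1:ℝ)^(n+j) * ((2*n).choose (n+j) : ℝ) * (x+2)^j) := by
  have hz : ∀ i ∉ range (n+1), qc n i * x^i = 0 := by
    intro i hi
    rw [mem_range, not_lt] at hi
    rw [qc_eq_zero hi]
    simp
  have h := hasSum_sum_of_ne_finset_zero (L := SummationFilter.unconditional ℕ) hz
  convert h using 1
  symm
  unfold qc
  simp_rw [sum_mul]
  rw [sum_comm]
  apply sum_congr rfl
  intro j hj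
  rw [mem_range, Nat.lt_succ_iff] at hj
  have e2 : ∑ i ∈ range (n+1), (-1:ℝ)^(n+j) * ((2*n).choose (n+j) : ℝ) * ((j.choose i : ℝ) * 2^(j-i)) * x^i
      = ∑ i ∈ range (j+1), (-1:ℝ)^(n+j) * ((2*n).choose (n+j) : ℝ) * ((j.choose i : ℝ) * 2^(j-i)) * x^i := by
    symm
    apply sum_subset (by rw [range_subset_range]; omega)
    intro i _ hi
    rw [mem_range, not_lt] at hi
    rw [Nat.choose_eq_zero_of_lt (show j < i by omega)]
    simp
  rw [e2, add_pow x 2 j, mul_sum]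
  apply sum_congr rfl
  intro i hi
  ring

noncomputable def dc (n i : ℕ) : ℝ :=
  qc n i + ∑ j ∈ range n, (-1:ℝ)^j * ((2*n).choose j : ℝ) * ac (n-1-j) i

lemma hasSum_dc (n : ℕ) {x : ℝ} (hx : |x| < 2) :
    HasSum (fun i => dc n i * x^i) ((x + 1/(x+2))^n) := by
  have hx2 : x + 2 ≠ 0 := by
    have := abs_lt.mp hx
    intro h; linarith [this.1]
  have h1 := hasSum_qc n x
  have h2 : HasSum (fun i => (∑ j ∈ range n, (-1:ℝ)^j * ((2*n).choose j : ℝ) * ac (n-1-j) i) * x^i)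
      (∑ j ∈ range n, (-1:ℝ)^j * ((2*n).choose j : ℝ) * (1/(x+2)^(n-j))) := by
    have hh : ∀ j ∈ range n, HasSum (fun i => (-1:ℝ)^j * ((2*n).choose j : ℝ) * (ac (n-1-j) i * x^i))
        ((-1:ℝ)^j * ((2*n).choose j : ℝ) * (1/(x+2)^(n-j))) := by
      intro j hj
      rw [mem_range] at hj
      have := (hasSum_ac (n-1-j) hx).mul_left ((-1:ℝ)^j * ((2*n).choose j : ℝ))
      rwa [show n-1-j+1 = n-j by omega] at this
    have := hasSum_sum hh
    convert this using 1
    funext i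
    rw [sum_mul]
    apply sum_congr rfl
    intro j hj
    ring
  have h := h1.add h2
  have hfun : (fun i => dc n i * x^i) = fun i => qc n i * x^i
      + (∑ j ∈ range n, (-1:ℝ)^j * ((2*n).choose j : ℝ) * ac (n-1-j) i) * x^i := by
    funext i
    unfold dc
    ring
  rw [hfun]
  convert h using 1
  have key : ∑ t ∈ range (2*n+1), (-1:ℝ)^t * ((2*n).choose t : ℝ) * (x+2)^t = (x+1)^(2*n) := by
    have hs := sub_pow (x+2) (1:ℝ) (2*n)
    rw [show x+2-1 = x+1 by ring] at hs
    rw [hs]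
    apply sum_congr rfl
    intro m hm
    rw [one_pow]
    have : (-1:ℝ)^(m+2*n) = (-1)^m := by
      rw [pow_add, pow_mul]
      norm_num
    rw [this]
    ring
  rw [show 2*n+1 = n + (n+1) by omega, sum_range_add] at key
  have hL : x + 1/(x+2) = (x+1)^2/(x+2) := by
    field_simp
    ring
  rw [hL, div_pow, ← pow_mul, div_eq_iff (pow_ne_zero _ hx2), add_mul, sum_mul, sum_mul, ← key]
  rw [add_comm]
  congr 1
  · apply sum_congr rfl
    intro j hj
    rw [pow_add]
    ring
  · apply sum_congr rfl
    intro j hj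
    rw [mem_range] at hj
    rw [show (x+2)^n = (x+2)^(n-j) * (x+2)^j by rw [← pow_add]; congr 1; omega]
    field_simp

lemma coeff_unique {c : ℕ → ℝ} {f : ℝ → ℝ}
    (hc : ∀ x : ℝ, |x| < 2 → HasSum (fun i : ℕ => c i * x ^ i) (f x)) :
    HasFPowerSeriesAt f (ofScalars ℝ c) 0 := by
  have hrad : 1 ≤ (ofScalars ℝ c).radius := by
    have hs : Summable (fun i => c i * (1:ℝ)^i) := (hc 1 (by norm_num)).summable
    have ht : Filter.Tendsto c Filter.atTop (nhds 0) := by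
      simpa using hs.tendsto_atTop_zero
    apply FormalMultilinearSeries.le_radius_of_isBigO
    simp only [ofScalars_norm]
    rw [NNReal.coe_one]
    simp only [one_pow, mul_one]
    exact (ht.isBigO_one ℝ).norm_left
  have hball : HasFPowerSeriesOnBall f (ofScalars ℝ c) 0 1 :=
    { r_le := hrad
      r_pos := one_pos
      hasSum := by
        intro y hy
        rw [EMetric.mem_ball, edist_zero_right] at hy
        have hy2 : |y| < 2 := by
          have : ‖y‖ < 1 := by
            rw [← ofReal_norm, ENNReal.ofReal_lt_one] at hy
            exact hy
          rw [Real.norm_eq_abs] at this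
          linarith
        have := hc y hy2
        simp only [zero_add]
        convert this using 2 with i
        rfl
        rw [ofScalars_apply_eq]
        simp [mul_comm] }
  exact hball.hasFPowerSeriesAt

lemma coeff_ext {c d : ℕ → ℝ} {f : ℝ → ℝ}
    (hc : ∀ x : ℝ, |x| < 2 → HasSum (fun i : ℕ => c i * x ^ i) (f x))
    (hd : ∀ x : ℝ, |x| < 2 → HasSum (fun i : ℕ => d i * x ^ i) (f x)) : c = d := by
  have h := (coeff_unique hc).eq_formalMultilinearSeries (coeff_unique hd)
  exact ofScalars_series_injective ℝ ℝ h

lemma collapse (n : ℕ) :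
    ∑ j ∈ range n, ∑ b ∈ range (n-j),
        (-1:ℝ)^b * ((2*n).choose j : ℝ) * ((2*n-j).choose b : ℝ) * 3^(b+j) * 2^j
      = ∑ m ∈ range n, ((2*n).choose m : ℝ) * 3^m := by
  rw [← sum_range_diag_flip n (fun j b =>
      (-1:ℝ)^b * ((2*n).choose j : ℝ) * ((2*n-j).choose b : ℝ) * 3^(b+j) * 2^j)]
  apply sum_congr rfl
  intro m hm
  rw [mem_range] at hm
  have key : ∀ k ∈ range (m+1),
      (-1:ℝ)^(m-k) * ((2*n).choose k : ℝ) * ((2*n-k).choose (m-k) : ℝ) * 3^(m-k+k) * 2^k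
        = ((2*n).choose m : ℝ) * 3^m * ((-1:ℝ)^(k+m) * 2^k * 1^(m-k) * (m.choose k : ℝ)) := by
    intro k hk
    rw [mem_range, Nat.lt_succ_iff] at hk
    have hcm : ((2*n).choose k : ℝ) * ((2*n-k).choose (m-k) : ℝ)
        = ((2*n).choose m : ℝ) * (m.choose k : ℝ) := by
      rw [← Nat.cast_mul, ← Nat.cast_mul, Nat.choose_mul hk]
    have hsgn : (-1:ℝ)^(m-k) = (-1:ℝ)^(k+m) := by
      rw [show k+m = (m-k)+2*k by omega, pow_add, pow_mul]
      norm_num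
    rw [show m-k+k = m by omega, hsgn]
    calc (-1:ℝ)^(k+m) * ((2*n).choose k : ℝ) * ((2*n-k).choose (m-k) : ℝ) * 3^m * 2^k
        = ((2*n).choose k : ℝ) * ((2*n-k).choose (m-k) : ℝ) * ((-1:ℝ)^(k+m) * 3^m * 2^k) := by ring
      _ = ((2*n).choose m : ℝ) * (m.choose k : ℝ) * ((-1:ℝ)^(k+m) * 3^m * 2^k) := by rw [hcm]
      _ = ((2*n).choose m : ℝ) * 3^m * ((-1:ℝ)^(k+m) * 2^k * 1^(m-k) * (m.choose k : ℝ)) := by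
            rw [one_pow]; ring
  rw [sum_congr rfl key, ← mul_sum]
  have hone : ∑ k ∈ range (m+1), (-1:ℝ)^(k+m) * 2^k * 1^(m-k) * (m.choose k : ℝ) = 1 := by
    have := sub_pow (2:ℝ) 1 m
    rw [show (2:ℝ)-1 = 1 by norm_num, one_pow] at this
    rw [← this]
  rw [hone, mul_one]

lemma final_algebra (n : ℕ) (hn : 0 < n) :
    (4/3:ℝ)^n - ∑ i ∈ range (n+1), dc n i
      = (∑ b ∈ range n, ((2*n).choose b : ℝ) * 3^b) / (2^(2*n) * 3^n) := by
  -- full alternating binomial sum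
  have hE : (∑ j ∈ range n, (-1:ℝ)^j * ((2*n).choose j : ℝ) * 3^j)
      + (∑ j ∈ range (n+1), (-1:ℝ)^(n+j) * ((2*n).choose (n+j) : ℝ) * 3^(n+j)) = 4^n := by
    have hs := sub_pow (3:ℝ) 1 (2*n)
    rw [show (3:ℝ)-1 = 2 by norm_num] at hs
    have h2 : (2:ℝ)^(2*n) = 4^n := by rw [pow_mul]; norm_num
    rw [h2] at hs
    rw [← sum_range_add (fun t => (-1:ℝ)^t * ((2*n).choose t : ℝ) * 3^t) n (n+1),
      show n+(n+1) = 2*n+1 by omega, hs]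
    apply sum_congr rfl
    intro t ht
    rw [one_pow]
    have : (-1:ℝ)^(t+2*n) = (-1)^t := by
      rw [pow_add, pow_mul]
      norm_num
    rw [this]
    ring
  -- qc sum value
  have hQ : ∑ i ∈ range (n+1), qc n i
      = ∑ j ∈ range (n+1), (-1:ℝ)^(n+j) * ((2*n).choose (n+j) : ℝ) * 3^j := by
    have h1 := hasSum_qc n 1
    have hz : ∀ i ∉ range (n+1), qc n i * (1:ℝ)^i = 0 := by
      intro i hi
      rw [mem_range, not_lt] at hi
      rw [qc_eq_zero hi]
      simp
    have h2 := hasSum_sum_of_ne_finset_zero (L := SummationFilter.unconditional ℕ) hz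
    have h3 := h1.unique h2
    norm_num at h3
    rw [← h3]
  -- Sa and tail
  set Sa : ℕ → ℝ := fun j => ∑ i ∈ range (n+1), ac (n-1-j) i with hSadef
  set tail : ℕ → ℝ := fun j => ∑ b ∈ range (n-j),
      ((2*n-j).choose (n+1+b) : ℝ) * (-1/2)^(n+1+b) * (3/2)^(2*n-j-(n+1+b)) with htaildef
  have hS2 : ∀ j ∈ range n, Sa j * 3^(n-j) = 1 - tail j := by
    intro j hj
    rw [mem_range] at hj
    have h1 := sum_ac (n-1-j) n
    rw [show n-1-j+1 = n-j by omega, show n+(n-1-j)+1 = 2*n-j by omega] at h1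
    have hfull : ((-1/2:ℝ) + 3/2)^(2*n-j)
        = ∑ s ∈ range (2*n-j+1), ((2*n-j).choose s : ℝ) * (-1/2)^s * (3/2)^(2*n-j-s) := by
      rw [add_pow]
      apply sum_congr rfl
      intro s hs
      ring
    rw [show (-1/2:ℝ)+3/2 = 1 by norm_num, one_pow] at hfull
    rw [show 2*n-j+1 = (n+1)+(n-j) by omega,
      sum_range_add (fun s => ((2*n-j).choose s : ℝ) * (-1/2)^s * (3/2)^(2*n-j-s)) (n+1) (n-j)]
      at hfull
    rw [h1]
    simp only [htaildef]
    linear_combination -hfull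
  -- tail conversion
  have htail : ∀ j ∈ range n,
      tail j * ((-1:ℝ)^j * ((2*n).choose j : ℝ) * 3^j * 2^(2*n))
        = ∑ b ∈ range (n-j), (-1:ℝ)^b * ((2*n).choose j : ℝ) * ((2*n-j).choose b : ℝ) * 3^(b+j) * 2^j := by
    intro j hj
    rw [mem_range] at hj
    simp only [htaildef]
    rw [sum_mul]
    rw [← sum_range_reflect (fun b => ((2*n-j).choose (n+1+b) : ℝ) * (-1/2)^(n+1+b)
      * (3/2)^(2*n-j-(n+1+b)) * ((-1:ℝ)^j * ((2*n).choose j : ℝ) * 3^j * 2^(2*n))) (n-j)]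
    apply sum_congr rfl
    intro b hb
    rw [mem_range] at hb
    rw [show 2*n-j-(n+1+(n-j-1-b)) = b by omega]
    rw [show n+1+(n-j-1-b) = 2*n-j-b by omega]
    rw [Nat.choose_symm (show b ≤ 2*n-j by omega)]
    rw [show 2*n-j-b = 2*n-(j+b) by omega]
    rw [pow_sub₀ ((-1/2):ℝ) (by norm_num) (show j+b ≤ 2*n by omega)]
    have h2n : ((-1/2:ℝ))^(2*n) = ((4:ℝ)⁻¹)^n := by rw [pow_mul]; norm_num
    have h4 : (2:ℝ)^(2*n) = 4^n := by rw [pow_mul]; norm_num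
    rw [h2n, h4]
    have hY : ((-1/2:ℝ))^(j+b) ≠ 0 := pow_ne_zero _ (by norm_num)
    field_simp
    ring_nf
    have eA : (1/4:ℝ)^n * 4^n = 1 := by rw [← mul_pow]; norm_num
    have eB : (-1:ℝ)^b * (-1/2)^b * 3^b = (3/2)^b := by rw [← mul_pow, ← mul_pow]; norm_num
    have eC : (-1/2:ℝ)^j * 2^j = (-1)^j := by rw [← mul_pow]; norm_num
    linear_combination (((n * 2 - j).choose b : ℝ) * ((n * 2).choose j : ℝ) * (-1) ^ j * (3 / 2:ℝ) ^ b * 3 ^ j) * eA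
      - (((n * 2 - j).choose b : ℝ) * ((n * 2).choose j : ℝ) * 3 ^ j * ((-1/2:ℝ)^j * 2^j)) * eB
      - (((n * 2 - j).choose b : ℝ) * ((n * 2).choose j : ℝ) * 3 ^ j * (3/2:ℝ)^b) * eC
  -- split the dc sum
  have hsplit : ∑ i ∈ range (n+1), dc n i
      = (∑ i ∈ range (n+1), qc n i)
        + ∑ j ∈ range n, (-1:ℝ)^j * ((2*n).choose j : ℝ) * Sa j := by
    unfold dc
    rw [sum_add_distrib]
    congr 1
    rw [sum_comm]
    apply sum_congr rfl
    intro j _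
    rw [mul_sum]
  -- assemble
  rw [eq_div_iff (show (2:ℝ)^(2*n) * 3^n ≠ 0 by positivity), hsplit]
  have hA1 : (∑ i ∈ range (n+1), qc n i) * 3^n
      = 4^n - (∑ j ∈ range n, (-1:ℝ)^j * ((2*n).choose j : ℝ) * 3^j) := by
    rw [hQ, sum_mul]
    have : ∀ j ∈ range (n+1), (-1:ℝ)^(n+j) * ((2*n).choose (n+j) : ℝ) * 3^j * 3^n
        = (-1:ℝ)^(n+j) * ((2*n).choose (n+j) : ℝ) * 3^(n+j) := by
      intro j _
      rw [pow_add]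
      ring
    rw [sum_congr rfl this]
    linear_combination hE
  have hA2 : (∑ j ∈ range n, (-1:ℝ)^j * ((2*n).choose j : ℝ) * Sa j) * (3^n * 2^(2*n))
      = (∑ j ∈ range n, (-1:ℝ)^j * ((2*n).choose j : ℝ) * 3^j) * 2^(2*n)
        - ∑ b ∈ range n, ((2*n).choose b : ℝ) * 3^b := by
    rw [← collapse, sum_mul, sum_mul, ← sum_sub_distrib]
    apply sum_congr rfl
    intro j hj
    have h1 := hS2 j hj
    have h2 := htail j hj
    rw [mem_range] at hj
    have h3 : (3:ℝ)^(n-j) * 3^j = 3^n := by rw [← pow_add]; congr 1; omega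
    linear_combination ((-1:ℝ)^j * ((2*n).choose j : ℝ) * 3^j * 2^(2*n)) * h1
      - ((-1:ℝ)^j * ((2*n).choose j : ℝ) * 2^(2*n) * Sa j) * h3 - h2
  have h43 : (4/3:ℝ)^n * 3^n = 4^n := by
    rw [div_pow]
    field_simp
  linear_combination (2:ℝ)^(2*n) * h43 - (2:ℝ)^(2*n) * hA1 - hA2

theorem stmt_15 (n : ℕ) (hn : 0 < n) (c : ℕ → ℝ)
    (hc : ∀ x : ℝ, |x| < 2 → HasSum (fun i : ℕ => c i * x ^ i) ((x + 1 / (x + 2)) ^ n)) :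
    (∑' l : ℕ, c (n + 1 + l)) =
        (∑ b ∈ Finset.range n, ((2 * n).choose b : ℝ) * 3 ^ b) / (2 ^ (2 * n) * 3 ^ n) ∧
      0 < ∑' l : ℕ, c (n + 1 + l) := by
  have hcd : c = dc n := coeff_ext hc (fun x hx => hasSum_dc n hx)
  subst hcd
  have h1 : HasSum (fun i => dc n i) ((4/3:ℝ)^n) := by
    have h := hasSum_dc n (x := 1) (by norm_num)
    norm_num at h
    convert h using 2
    try norm_num
  have key := Summable.sum_add_tsum_nat_add (n+1) h1.summable
  have htsum : ∑' i, dc n i = (4/3:ℝ)^n := h1.tsum_eq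
  have hT : ∑' l, dc n (n+1+l) = (4/3:ℝ)^n - ∑ i ∈ range (n+1), dc n i := by
    have he : (fun l => dc n (n+1+l)) = fun l => dc n (l+(n+1)) := by
      funext l
      congr 1
      omega
    rw [he]
    linarith [key]
  rw [hT, final_algebra n hn]
  refine ⟨rfl, ?_⟩
  apply div_pos
  · apply sum_pos
    · intro b hb
      rw [mem_range] at hb
      have : 0 < (2*n).choose b := Nat.choose_pos (by omega)
      positivity
    · exact ⟨0, mem_range.mpr hn⟩
  · positivity
end

section
/- With c_i^n the Taylor coefficients at 0 of (z + 1/(z+2))^n, for every integer n ≥ 0 one has c_n^n = 1/2 + C(2n,n)/2^{2n+1}. -/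
open Polynomial Finset Filter Asymptotics

lemma coeff_one_sub_X_pow (m k : ℕ) (hk : k ≤ m) :
    ((1 - (X:ℤ[X]))^m).coeff k = (-1:ℤ)^k * (m.choose k : ℤ) := by
  have h : (1 - (X:ℤ[X]))^m = ∑ j ∈ Finset.range (m+1), ((-1:ℤ[X])^j * (m.choose j : ℤ[X]) * X^j) := by
    rw [sub_eq_add_neg, add_comm, add_pow]
    refine Finset.sum_congr rfl fun j hj => ?_
    rw [neg_pow]
    ring
  rw [h, finset_sum_coeff]
  have h2 : ∀ j ∈ Finset.range (m+1), ((-1:ℤ[X])^j * (m.choose j : ℤ[X]) * X^j).coeff k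
      = if j = k then (-1:ℤ)^k * (m.choose k : ℤ) else 0 := by
    intro j hj
    have e : ((-1:ℤ[X])^j * (m.choose j : ℤ[X]) * X^j) = Polynomial.C ((-1:ℤ)^j * (m.choose j : ℤ)) * X^j := by
      simp only [map_mul, map_pow, map_neg, map_one, map_natCast]
    rw [e, Polynomial.coeff_C_mul, Polynomial.coeff_X_pow]
    by_cases hjk : j = k
    · simp [hjk]
    · simp only [Polynomial.coeff_C_mul, if_neg hjk, mul_zero]
      rw [if_neg (fun h : k = j => hjk h.symm), mul_zero]
  rw [Finset.sum_congr rfl h2, Finset.sum_ite_eq' (Finset.range (m+1)) k]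
  simp [Nat.lt_succ_iff.mpr hk]

lemma key_id (n : ℕ) :
    ∑ k ∈ Finset.range (n+1), ((-1:ℤ)^k * (n.choose k:ℤ) * ((2*k).choose k:ℤ) * 4^(n-k)) =
      ((2*n).choose n : ℤ) := by
  have h1 : ((4:ℤ[X]) * X + (-((1+X)^2)))^n = (-1)^n * (1-X)^(2*n) := by
    rw [show (4:ℤ[X]) * X + (-((1+X)^2)) = (-1) * (1-X)^2 by ring, mul_pow, ← pow_mul]
  rw [add_pow] at h1
  have h2 := congrArg (fun p => Polynomial.coeff p n) h1
  simp only [finset_sum_coeff] at h2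
  have hL : ∀ k ∈ Finset.range (n+1),
      ((((4:ℤ[X])*X)^k * (-((1+X)^2))^(n-k) * (n.choose k : ℤ[X]))).coeff n
      = (-1:ℤ)^(n-k) * (n.choose k:ℤ) * ((2*(n-k)).choose (n-k):ℤ) * 4^k := by
    intro k hk
    have hkn : k ≤ n := Nat.lt_succ_iff.mp (Finset.mem_range.mp hk)
    have e1 : (((4:ℤ[X])*X)^k * (-((1+X)^2))^(n-k) * (n.choose k : ℤ[X]))
        = Polynomial.C ((-1:ℤ)^(n-k) * (n.choose k:ℤ) * 4^k) * (X^k * (1+X)^(2*(n-k))) := by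
      rw [mul_pow, neg_pow, ← pow_mul]
      simp only [map_mul, map_pow, map_neg, map_one, map_natCast, map_ofNat]
      ring
    rw [e1, Polynomial.coeff_C_mul]
    have e2 : (X^k * ((1:ℤ[X])+X)^(2*(n-k))).coeff n = ((2*(n-k)).choose (n-k) : ℤ) := by
      have hh := Polynomial.coeff_X_pow_mul (((1:ℤ[X])+X)^(2*(n-k))) k (n-k)
      rw [show n - k + k = n by omega] at hh
      rw [hh, Polynomial.coeff_one_add_X_pow]
    rw [e2]
    ring
  rw [Finset.sum_congr rfl hL] at h2
  have hR : ((-1:ℤ[X])^n * (1-X)^(2*n)).coeff n = ((2*n).choose n : ℤ) := by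
    rw [show ((-1:ℤ[X])^n) = Polynomial.C ((-1:ℤ)^n) by rw [map_pow, map_neg, map_one], Polynomial.coeff_C_mul,
      coeff_one_sub_X_pow (2*n) n (by omega)]
    rw [← mul_assoc, ← mul_pow]
    simp
  simp only [hR] at h2
  rw [← h2, ← Finset.sum_range_reflect]
  refine Finset.sum_congr rfl fun k hk => ?_
  have hkn : k ≤ n := Nat.lt_succ_iff.mp (Finset.mem_range.mp hk)
  have e3 : n + 1 - 1 - k = n - k := by omega
  rw [e3]
  have h4 : n - (n - k) = k := by omega
  rw [h4, Nat.choose_symm hkn]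

lemma coeff_unique_s17 {g : ℝ → ℝ} {c a : ℕ → ℝ}
    (hc : ∀ x : ℝ, |x| < 2 → HasSum (fun i => c i * x ^ i) (g x))
    (ha : ∀ x : ℝ, |x| < 2 → HasSum (fun i => a i * x ^ i) (g x)) : c = a := by
  have key : ∀ d : ℕ → ℝ, (∀ x : ℝ, |x| < 2 → HasSum (fun i => d i * x ^ i) (g x)) →
      HasFPowerSeriesOnBall g (FormalMultilinearSeries.ofScalars ℝ d) 0 2 := by
    intro d hd
    refine ⟨?_, by norm_num, ?_⟩
    · apply ENNReal.le_of_forall_nnreal_lt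
      intro r hr
      have hr2 : (r : ℝ) < 2 := by exact_mod_cast hr
      have hsum := (hd r (by rwa [abs_of_nonneg r.coe_nonneg])).summable
      apply FormalMultilinearSeries.le_radius_of_isBigO
      have ht : Tendsto (fun n => d n * (r:ℝ)^n) atTop (nhds 0) := hsum.tendsto_atTop_zero
      have hO : (fun n => d n * (r:ℝ)^n) =O[atTop] (fun _ => (1:ℝ)) := ht.isBigO_one ℝ
      have he : (fun n => ‖FormalMultilinearSeries.ofScalars ℝ d n‖ * (r:ℝ)^n)
          = fun n => ‖d n * (r:ℝ)^n‖ := by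
        funext i
        rw [FormalMultilinearSeries.ofScalars_norm, norm_mul, norm_pow,
          Real.norm_eq_abs (r:ℝ), abs_of_nonneg r.coe_nonneg]
      rw [he]
      exact hO.norm_left
    · intro y hy
      have hy2 : |y| < 2 := by
        rw [EMetric.mem_ball, edist_zero_right] at hy
        have h2 : ‖y‖₊ < (2 : NNReal) := by rw [enorm_eq_nnnorm] at hy; exact_mod_cast hy
        rw [← NNReal.coe_lt_coe] at h2
        simpa [Real.norm_eq_abs] using h2
      have heq : (fun i => (FormalMultilinearSeries.ofScalars ℝ d i) fun _ => y)
          = fun i => d i * y ^ i := by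
        funext i
        rw [FormalMultilinearSeries.ofScalars_apply_eq, smul_eq_mul]
      rw [zero_add, heq]
      exact hd y hy2
  have h := ((key c hc).hasFPowerSeriesAt).eq_formalMultilinearSeries ((key a ha).hasFPowerSeriesAt)
  exact FormalMultilinearSeries.ofScalars_series_injective ℝ ℝ h

lemma central_choose (k : ℕ) : (2 * (k + 1)).choose (k + 1) = 2 * ((k + 1 + k).choose k) := by
  have h1 : 2 * (k + 1) = (2 * k + 1) + 1 := by ring
  have h2 : (2 * k + 1).choose (k + 1) = (2 * k + 1).choose k := by
    rw [show k + 1 = (2 * k + 1) - k by omega, Nat.choose_symm (by omega)]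
  rw [h1, Nat.choose_succ_succ, h2, show k + 1 + k = 2 * k + 1 by omega]
  omega

noncomputable def bcoef (n : ℕ) : ℕ → ℕ → ℝ := fun k i =>
  if k = 0 then (if i = n then 1 else 0)
  else if n - k ≤ i then
    (n.choose k : ℝ) * (((i - (n - k)) + (k - 1)).choose (k - 1) : ℝ) * (-1) ^ (i - (n - k)) /
      2 ^ (k + (i - (n - k)))
  else 0

lemma bcoef_hasSum (n : ℕ) (x : ℝ) (hx : |x| < 2) :
    HasSum (fun i : ℕ => (∑ k ∈ Finset.range (n + 1), bcoef n k i) * x ^ i)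
      ((x + 1 / (x + 2)) ^ n) := by
  have hx2 : (0:ℝ) < x + 2 := by
    rcases abs_lt.mp hx with ⟨h1, h2⟩; linarith
  have hx2' : x + 2 ≠ 0 := ne_of_gt hx2
  have hterm : ∀ k ∈ Finset.range (n + 1),
      HasSum (fun i => bcoef n k i * x ^ i)
        ((n.choose k : ℝ) * x ^ (n - k) * (1 / (x + 2)) ^ k) := by
    intro k hk
    have hkn : k ≤ n := Nat.lt_succ_iff.mp (Finset.mem_range.mp hk)
    rcases Nat.eq_zero_or_pos k with h0 | hpos
    · subst h0
      have he : (fun i => bcoef n 0 i * x ^ i) = fun i => if i = n then x ^ n else 0 := by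
        funext i
        simp only [bcoef, if_pos rfl]
        by_cases hin : i = n <;> simp [hin]
      rw [he]
      simpa using hasSum_ite_eq n (x ^ n)
    · obtain ⟨k', rfl⟩ : ∃ k', k = k' + 1 := ⟨k - 1, by omega⟩
      have hr : ‖-x / 2‖ < 1 := by
        rw [Real.norm_eq_abs, abs_div, abs_neg]
        rw [abs_of_pos (by norm_num : (0:ℝ) < 2)]
        linarith
      have base := hasSum_choose_mul_geometric_of_norm_lt_one k' hr
      set A : ℝ := (n.choose (k' + 1) : ℝ) * x ^ (n - (k' + 1)) / 2 ^ (k' + 1) with hA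
      have H2 := base.mul_left A
      have hval : A * (1 / (1 - -x / 2) ^ (k' + 1))
          = (n.choose (k' + 1) : ℝ) * x ^ (n - (k' + 1)) * (1 / (x + 2)) ^ (k' + 1) := by
        rw [show (1:ℝ) - -x / 2 = (x + 2) / 2 by ring]
        rw [hA, div_pow, div_pow]
        field_simp
        ring
      rw [hval] at H2
      have hinj : Function.Injective (fun j : ℕ => j + (n - (k' + 1))) :=
        add_left_injective _
      have hvan : ∀ i ∉ Set.range (fun j : ℕ => j + (n - (k' + 1))),
          bcoef n (k' + 1) i * x ^ i = 0 := by
        intro i hi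
        have : ¬ (n - (k' + 1) ≤ i) := by
          intro hle
          exact hi ⟨i - (n - (k' + 1)), by simp only []; omega⟩
        simp only [bcoef, if_neg (Nat.succ_ne_zero k'), if_neg this, zero_mul]
      have hcomp : ((fun i => bcoef n (k' + 1) i * x ^ i) ∘ fun j : ℕ => j + (n - (k' + 1)))
          = fun j => A * (((j + k').choose k' : ℝ) * (-x / 2) ^ j) := by
        funext j
        simp only [Function.comp]
        have hc1 : j + (n - (k' + 1)) - (n - (k' + 1)) = j := by omega
        simp only [bcoef, if_neg (Nat.succ_ne_zero k'),
          if_pos (Nat.le_add_left (n - (k' + 1)) j), hc1, Nat.add_sub_cancel]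
        rw [hA]
        rw [show (-x / 2) ^ j = (-1) ^ j * x ^ j / 2 ^ j by rw [div_pow]; ring]
        rw [pow_add x j (n - (k' + 1)), pow_add (2:ℝ)]
        field_simp
      have := (hinj.hasSum_iff hvan).mp (by rw [hcomp]; exact H2)
      exact this
  have htot := hasSum_sum hterm
  have heq1 : (fun i => ∑ k ∈ Finset.range (n + 1), bcoef n k i * x ^ i)
      = fun i => (∑ k ∈ Finset.range (n + 1), bcoef n k i) * x ^ i := by
    funext i; rw [Finset.sum_mul]
  have heq2 : (∑ k ∈ Finset.range (n + 1),
      (n.choose k : ℝ) * x ^ (n - k) * (1 / (x + 2)) ^ k) = (x + 1 / (x + 2)) ^ n := by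
    rw [add_comm x (1 / (x + 2)), add_pow]
    refine Finset.sum_congr rfl fun k hk => ?_
    ring
  rw [heq1, heq2] at htot
  exact htot

theorem stmt_17 (n : ℕ) (c : ℕ → ℝ)
    (hc : ∀ x : ℝ, |x| < 2 → HasSum (fun i : ℕ => c i * x ^ i) ((x + 1 / (x + 2)) ^ n)) :
    c n = 1 / 2 + ((2 * n).choose n : ℝ) / 2 ^ (2 * n + 1) := by
  have hceq : c = fun i => ∑ k ∈ Finset.range (n + 1), bcoef n k i :=
    coeff_unique_s17 hc (fun x hx => bcoef_hasSum n x hx)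
  have hcn : c n = ∑ k ∈ Finset.range (n + 1), bcoef n k n := congrFun hceq n
  -- cast key identity to ℝ and divide by 4^n
  have h' : ∑ k ∈ Finset.range (n+1), ((-1:ℝ)^k * (n.choose k:ℝ) * ((2*k).choose k:ℝ) * 4^(n-k))
      = ((2*n).choose n : ℝ) := by exact_mod_cast key_id n
  have hkey : ∑ k ∈ Finset.range (n+1), ((-1:ℝ)^k * (n.choose k:ℝ) * ((2*k).choose k:ℝ) / 4^k)
      = ((2*n).choose n : ℝ) / 4^n := by
    rw [eq_div_iff (by positivity : (4:ℝ)^n ≠ 0), Finset.sum_mul, ← h']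
    refine Finset.sum_congr rfl fun k hk => ?_
    have hkn : k ≤ n := Nat.lt_succ_iff.mp (Finset.mem_range.mp hk)
    rw [pow_sub₀ (4:ℝ) (by norm_num) hkn]
    field_simp
  rw [Finset.sum_range_succ'] at hkey
  have hg0 : ((-1:ℝ)^0 * (n.choose 0:ℝ) * ((2*0).choose 0:ℝ) / 4^0) = 1 := by norm_num
  rw [hg0] at hkey
  have hterm : ∀ k ∈ Finset.range n,
      ((-1:ℝ)^(k+1) * (n.choose (k+1):ℝ) * ((2*(k+1)).choose (k+1):ℝ) / 4^(k+1))
        = 2 * bcoef n (k+1) n := by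
    intro k hk
    have hkn : k + 1 ≤ n := Finset.mem_range.mp hk
    have h5 : n - (n - (k+1)) = k + 1 := by omega
    simp only [bcoef, if_neg (Nat.succ_ne_zero k), if_pos (by omega : n - (k+1) ≤ n), h5,
      Nat.add_sub_cancel]
    rw [central_choose k]
    push_cast
    rw [show (4:ℝ)^(k+1) = 2^((k+1)+(k+1)) by
      rw [show (4:ℝ) = 2^2 by norm_num, ← pow_mul]; ring_nf]
    ring
  rw [Finset.sum_congr rfl hterm, ← Finset.mul_sum] at hkey
  rw [hcn, Finset.sum_range_succ']
  have hb0 : bcoef n 0 n = 1 := by simp [bcoef]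
  rw [hb0]
  have h4n : (4:ℝ)^n = 2^(2*n) := by
    rw [show (4:ℝ) = 2^2 by norm_num, ← pow_mul]
  rw [h4n] at hkey
  have hpow : (2:ℝ)^(2*n+1) = 2 * 2^(2*n) := by rw [pow_succ]; ring
  rw [hpow]
  have h2n : (0:ℝ) < 2^(2*n) := by positivity
  field_simp at hkey ⊢
  linarith
end
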